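/- (Basic lifting) Let P_b be a (K, f, Z, S_b) PDA and for each i ∈ S_b let P_i be an (m, n, e, S_i) PDA, where the sets S_i are pairwise disjoint. Form the array B by replacing every ∗ in P_b by the n×m all-∗ array and every integer i ∈ S_b by P_i. Then B is a (Km, fn, Zn + (f−Z)e, ∪_{i∈S_b} S_i) PDA. -/
import Mathlib


open Finset

/-- Number of stars (`none`) in column `k` of the array `P`. -/
def colStars {f K : ℕ} (P : Fin f → Fin K → Option ℕ) (k : Fin K) : ℕ :=
  (Finset.univ.filter fun j => P j k = none).card

/-- `P` is a `(K, f, Z, S)` placement delivery array: an `f × K` array over `{∗} ∪ S`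
(`none` encodes `∗`) with exactly `Z` stars in each column, every integer of `S`
occurring at least once (and all integer entries lying in `S`), satisfying the
Blackburn property. -/
def IsPDA {f K : ℕ} (P : Fin f → Fin K → Option ℕ) (Z : ℕ) (S : Finset ℕ) : Prop :=
  (∀ k, colStars P k = Z) ∧
  (∀ s ∈ S, ∃ j k, P j k = some s) ∧
  (∀ j k s, P j k = some s → s ∈ S) ∧
  (∀ j₁ k₁ j₂ k₂ s, (j₁, k₁) ≠ (j₂, k₂) →
    P j₁ k₁ = some s → P j₂ k₂ = some s → P j₁ k₂ = none ∧ P j₂ k₁ = none)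

/-- Every integer of `S` appears exactly `g` times in the array `P`. -/
def IsRegularPDA {f K : ℕ} (P : Fin f → Fin K → Option ℕ) (S : Finset ℕ) (g : ℕ) : Prop :=
  ∀ s ∈ S, ((Finset.univ : Finset (Fin f × Fin K)).filter
    (fun jk => P jk.1 jk.2 = some s)).card = g

/-- `P₀` and `P₁` are Blackburn-compatible with respect to `Pstar`. -/
def BBCompat {n m : ℕ} (P₀ P₁ Pstar : Fin n → Fin m → Option ℕ) : Prop :=
  ∀ i₀ j₀ i₁ j₁ s, P₀ i₀ j₀ = some s → P₁ i₁ j₁ = some s →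
    Pstar i₀ j₁ = none ∧ Pstar i₁ j₀ = none

/-- `Ig n t` is the `n × n` array with the integer `t` on the main diagonal and `∗`
elsewhere. -/
def Ig (n t : ℕ) : Fin n → Fin n → Option ℕ := fun i j => if i = j then some t else none

/-- Block-row index of a global index for an array built from `a × a` grids of `b`-sized
blocks. -/
def blkIdx {a b : ℕ} (j : Fin (a * b)) : Fin a :=
  ⟨(j : ℕ) / b, Nat.div_lt_of_lt_mul (Nat.mul_comm a b ▸ j.isLt)⟩

/-- Within-block index of a global index. -/
def inIdx {a b : ℕ} (j : Fin (a * b)) : Fin b :=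
  ⟨(j : ℕ) % b, Nat.mod_lt _ (by
    rcases Nat.eq_zero_or_pos b with h | h
    · exact absurd j.isLt (by simp [h])
    · exact h)⟩

/-- Basic block lifting: every `∗` of the base array becomes an all-`∗` `n × m` block and
every integer `i` becomes the constituent array `Pc i`. -/
def blockLift {K f m n : ℕ} (Pb : Fin f → Fin K → Option ℕ)
    (Pc : ℕ → Fin n → Fin m → Option ℕ) :
    Fin (f * n) → Fin (K * m) → Option ℕ :=
  fun j k =>
    match Pb (blkIdx j) (blkIdx k) with
    | none => none
    | some i => Pc i (inIdx j) (inIdx k)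

def mkIdx {a b : ℕ} (J : Fin a) (j : Fin b) : Fin (a * b) :=
  ⟨J.1 * b + j.1, by
    calc J.1 * b + j.1 < J.1 * b + b := by omega
    _ = (J.1 + 1) * b := by ring
    _ ≤ a * b := Nat.mul_le_mul_right b J.2⟩

lemma blkIdx_mkIdx {a b : ℕ} (J : Fin a) (j : Fin b) : blkIdx (mkIdx J j) = J := by
  have hb : 0 < b := j.pos
  apply Fin.ext
  show (J.1 * b + j.1) / b = J.1
  rw [Nat.mul_comm, Nat.mul_add_div hb, Nat.div_eq_of_lt j.2, Nat.add_zero]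

lemma inIdx_mkIdx {a b : ℕ} (J : Fin a) (j : Fin b) : inIdx (mkIdx J j) = j := by
  apply Fin.ext
  show (J.1 * b + j.1) % b = j.1
  rw [Nat.mul_comm J.1 b, Nat.mul_add_mod, Nat.mod_eq_of_lt j.2]

lemma mkIdx_blk_in {a b : ℕ} (j : Fin (a * b)) : mkIdx (blkIdx j) (inIdx j) = j := by
  apply Fin.ext
  show (j : ℕ) / b * b + (j : ℕ) % b = (j : ℕ)
  rw [Nat.mul_comm]
  exact Nat.div_add_mod _ _

/-- **Basic lifting.** If `Pb` is a `(K, f, Z, Sb)` PDA and for each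
`i ∈ Sb`, `Pc i` is an `(m, n, e, Si i)` PDA with the `Si i` pairwise disjoint, then
replacing each `∗` of `Pb` by the all-`∗` `n × m` block and each integer `i` by `Pc i`
gives a `(Km, fn, Zn + (f−Z)e, ⋃ᵢ Si i)` PDA. -/
theorem stmt_6 {K f m n Z e : ℕ} (Sb : Finset ℕ)
    (Pb : Fin f → Fin K → Option ℕ) (hPb : IsPDA Pb Z Sb)
    (Si : ℕ → Finset ℕ) (Pc : ℕ → Fin n → Fin m → Option ℕ)
    (hPc : ∀ i ∈ Sb, IsPDA (Pc i) e (Si i))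
    (hdisj : ∀ i ∈ Sb, ∀ i' ∈ Sb, i ≠ i' → Disjoint (Si i) (Si i')) :
    IsPDA (blockLift Pb Pc) (Z * n + (f - Z) * e) (Sb.biUnion Si) := by
  
  obtain ⟨hZ, hocc, hmem, hBB⟩ := hPb
  -- extraction lemma
  have ext1 : ∀ (j : Fin (f*n)) (k : Fin (K*m)) (s : ℕ), blockLift Pb Pc j k = some s →
      ∃ i, Pb (blkIdx j) (blkIdx k) = some i ∧ Pc i (inIdx j) (inIdx k) = some s := by
    intro j k s h
    unfold blockLift at h
    rcases hh : Pb (blkIdx j) (blkIdx k) with _ | i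
    · rw [hh] at h; simp at h
    · rw [hh] at h; exact ⟨i, rfl, h⟩
  refine ⟨?_, ?_, ?_, ?_⟩
  · -- column star counts
    intro k
    have hZle : Z ≤ f := by
      have := hZ (blkIdx k)
      have h2 : colStars Pb (blkIdx k) ≤ f := by
        simpa [colStars] using Finset.card_filter_le (Finset.univ : Finset (Fin f)) _
      omega
    unfold colStars
    have hb1 : (Finset.univ.filter fun j : Fin (f*n) => blockLift Pb Pc j k = none).card
        = ((Finset.univ : Finset (Fin f × Fin n)).filter
            (fun p => blockLift Pb Pc (mkIdx p.1 p.2) k = none)).card := by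
      apply Finset.card_bij' (fun j _ => (blkIdx j, inIdx j)) (fun p _ => mkIdx p.1 p.2)
      · intro j hj
        simp only [Finset.mem_filter, Finset.mem_univ, true_and] at hj ⊢
        rw [mkIdx_blk_in]; exact hj
      · intro p hp
        simp only [Finset.mem_filter, Finset.mem_univ, true_and] at hp ⊢
        exact hp
      · intro j _; exact mkIdx_blk_in j
      · intro p _; simp [blkIdx_mkIdx, inIdx_mkIdx]
    rw [hb1, Finset.card_filter, Fintype.sum_prod_type]
    have hinner : ∀ J : Fin f,
        (∑ j : Fin n, if blockLift Pb Pc (mkIdx J j) k = none then 1 else 0)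
        = if Pb J (blkIdx k) = none then n else e := by
      intro J
      rcases hh : Pb J (blkIdx k) with _ | i
      · simp [blockLift, blkIdx_mkIdx, inIdx_mkIdx, hh]
      · have hi : i ∈ Sb := hmem J (blkIdx k) i hh
        have he := (hPc i hi).1 (inIdx k)
        simp only [blockLift, blkIdx_mkIdx, inIdx_mkIdx, hh]
        rw [← Finset.card_filter]
        simpa [colStars] using he
    rw [Finset.sum_congr rfl (fun J _ => hinner J)]
    rw [Finset.sum_ite, Finset.sum_const, Finset.sum_const, smul_eq_mul, smul_eq_mul]
    have hc1 : (Finset.univ.filter fun J : Fin f => Pb J (blkIdx k) = none).card = Z :=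
      hZ (blkIdx k)
    have hc2 : (Finset.univ.filter fun J : Fin f => ¬ Pb J (blkIdx k) = none).card = f - Z := by
      have := Finset.card_filter_add_card_filter_not
        (s := (Finset.univ : Finset (Fin f))) (p := fun J => Pb J (blkIdx k) = none)
      simp only [Finset.card_univ, Fintype.card_fin] at this
      omega
    rw [hc1, hc2]
  · -- every symbol occurs
    intro s hs
    obtain ⟨i, hi, hsi⟩ := Finset.mem_biUnion.1 hs
    obtain ⟨J, Kk, hJK⟩ := hocc i hi
    obtain ⟨jc, kc, hc⟩ := (hPc i hi).2.1 s hsi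
    exact ⟨mkIdx J jc, mkIdx Kk kc, by
      simp [blockLift, blkIdx_mkIdx, inIdx_mkIdx, hJK, hc]⟩
  · -- entries lie in the union
    intro j k s h
    obtain ⟨i, hb, hc⟩ := ext1 j k s h
    exact Finset.mem_biUnion.2 ⟨i, hmem _ _ _ hb, (hPc i (hmem _ _ _ hb)).2.2.1 _ _ _ hc⟩
  · -- Blackburn property
    intro j1 k1 j2 k2 s hne h1 h2
    obtain ⟨i1, hb1, hc1⟩ := ext1 j1 k1 s h1
    obtain ⟨i2, hb2, hc2⟩ := ext1 j2 k2 s h2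
    have hi1 : i1 ∈ Sb := hmem _ _ _ hb1
    have hi2 : i2 ∈ Sb := hmem _ _ _ hb2
    have hieq : i1 = i2 := by
      by_contra hne'
      exact Finset.disjoint_left.1 (hdisj i1 hi1 i2 hi2 hne')
        ((hPc i1 hi1).2.2.1 _ _ _ hc1) ((hPc i2 hi2).2.2.1 _ _ _ hc2)
    subst hieq
    by_cases hblk : ((blkIdx j1 : Fin f), (blkIdx k1 : Fin K)) = (blkIdx j2, blkIdx k2)
    · have hj : (blkIdx j1 : Fin f) = blkIdx j2 := (Prod.mk.injEq _ _ _ _ ▸ hblk).1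
      have hk : (blkIdx k1 : Fin K) = blkIdx k2 := (Prod.mk.injEq _ _ _ _ ▸ hblk).2
      have hinne : ((inIdx j1 : Fin n), (inIdx k1 : Fin m)) ≠ (inIdx j2, inIdx k2) := by
        intro hEq
        apply hne
        have h1' : (inIdx j1 : Fin n) = inIdx j2 := (Prod.mk.injEq _ _ _ _ ▸ hEq).1
        have h2' : (inIdx k1 : Fin m) = inIdx k2 := (Prod.mk.injEq _ _ _ _ ▸ hEq).2
        have : j1 = j2 := by
          rw [← mkIdx_blk_in j1, ← mkIdx_blk_in j2, hj, h1']
        have : k1 = k2 := by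
          rw [← mkIdx_blk_in k1, ← mkIdx_blk_in k2, hk, h2']
        simp_all
      obtain ⟨hn1, hn2⟩ := (hPc i1 hi1).2.2.2 _ _ _ _ s hinne hc1 hc2
      constructor
      · show blockLift Pb Pc j1 k2 = none
        have : Pb (blkIdx j1) (blkIdx k2) = some i1 := by rw [← hk]; exact hb1
        simp [blockLift, this, hn1]
      · show blockLift Pb Pc j2 k1 = none
        have : Pb (blkIdx j2) (blkIdx k1) = some i1 := by rw [hk]; exact hb2
        simp [blockLift, this, hn2]
    · obtain ⟨hn1, hn2⟩ := hBB _ _ _ _ i1 hblk hb1 hb2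
      constructor
      · show blockLift Pb Pc j1 k2 = none
        simp [blockLift, hn1]
      · show blockLift Pb Pc j2 k1 = none
        simp [blockLift, hn2]
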